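/- In the setting of the truncated rotor-router chains: let R_n^d be the number of returns to a via finite excursions before the n-th return to a, for the rotor walk on the chain truncated at distance d (particles reaching distance d are sent back to a), all with the same initial rotor configuration. Then R_n^{d+1} >= R_n^d for all n and d. -/

import Mathlib

open scoped BigOperators Classical

/-- `(x, r)` is a rotor walk for the rotor mechanism `(d, succ)`.  Rotor values are
`0`-based: rotor value `j` at `u` means the rotor points to `succ u j`
(corresponding to `u^(j+1)` in `1`-based notation).  At each step the rotor at the
current particle position is incremented cyclically and the particle moves in the
new rotor direction. -/
def IsRotorWalk {V : Type*} (d : V → ℕ) (succ : V → ℕ → V)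
    (x : ℕ → V) (r : ℕ → V → ℕ) : Prop :=
  (∀ v, r 0 v < d v) ∧
  (∀ t, r (t + 1) (x t) = (r t (x t) + 1) % d (x t)) ∧
  (∀ t v, v ≠ x t → r (t + 1) v = r t v) ∧
  (∀ t, x (t + 1) = succ (x t) (r (t + 1) (x t)))

/-- the number of visits of the walk `x` to `v` strictly before time `t` -/
noncomputable def nvisits {V : Type*} (x : ℕ → V) (t : ℕ) (v : V) : ℕ :=
  ((Finset.range t).filter fun s => x s = v).card

/-- the rotor mechanism `(d, succ)` realizes the transition kernel `p`:
`p u v` is the proportion of the `d u` successors of `u` equal to `v` -/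
def Realizes {V : Type*} (d : V → ℕ) (succ : V → ℕ → V) (p : V → V → ℝ) : Prop :=
  (∀ u, 0 < d u) ∧
  ∀ u v, p u v = ((Finset.range (d u)).filter fun i => succ u i = v).card / d u

/-- irreducibility of the kernel: any vertex can be reached from any other by a path of
positive-probability steps -/
def IrreducibleKernel {V : Type*} (p : V → V → ℝ) : Prop :=
  ∀ u v : V, ∃ (n : ℕ) (f : ℕ → V), f 0 = u ∧ f n = v ∧ ∀ i < n, 0 < p (f i) (f (i + 1))

/-- the set of vertices reachable from `a` in at most `k` steps -/
def reachSet {V : Type*} (p : V → V → ℝ) (a : V) : ℕ → Set V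
  | 0 => {a}
  | k + 1 => reachSet p a k ∪ {v | ∃ u ∈ reachSet p a k, 0 < p u v}

/-- the boundary layer `∂B(d) = B(d) \\ B(d-1)` -/
def layer {V : Type*} (p : V → V → ℝ) (a : V) (dd : ℕ) : Set V :=
  reachSet p a dd \ reachSet p a (dd - 1)

/-- degrees for the truncated chain on `V ⊕ Unit`: the vertex `a` is split into
`a₀ = Sum.inl a` (outgoing) and `a₁ = Sum.inr ()` (incoming, with a single successor
`a₀`), and vertices on the boundary layer `∂B(dd)` have a single successor `a₀`. -/
noncomputable def dHat {V : Type*} (p : V → V → ℝ) (a : V) (d : V → ℕ) (dd : ℕ) :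
    V ⊕ Unit → ℕ
  | Sum.inl u => if u ∈ layer p a dd then 1 else d u
  | Sum.inr _ => 1

/-- successors for the truncated chain: boundary vertices and `a₁` point to `a₀`;
otherwise successors are inherited, with the target `a` replaced by `a₁`. -/
noncomputable def succHat {V : Type*} (p : V → V → ℝ) (a : V) (succ : V → ℕ → V)
    (dd : ℕ) : V ⊕ Unit → ℕ → V ⊕ Unit
  | Sum.inl u, i =>
      if u ∈ layer p a dd then Sum.inl a
      else if succ u i = a then Sum.inr () else Sum.inl (succ u i)
  | Sum.inr _, _ => Sum.inl a

/-- the initial rotor configuration for the truncated chain, inherited from `r₀` -/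
noncomputable def rHat {V : Type*} (p : V → V → ℝ) (a : V) (r₀ : V → ℕ) (dd : ℕ) :
    V ⊕ Unit → ℕ
  | Sum.inl u => if u ∈ layer p a dd then 0 else r₀ u
  | Sum.inr _ => 0

/-- the number of returns to `a₀` among times `1, …, t` -/
noncomputable def returnsBy {V : Type*} (a : V) (xh : ℕ → V ⊕ Unit) (t : ℕ) : ℕ :=
  ((Finset.Icc 1 t).filter fun s => xh s = (Sum.inl a : V ⊕ Unit)).card

/-- `R_n^d`: the number of visits to `a₁` (returns to `a` via finite excursions) before
the `n`-th return to `a₀` -/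
noncomputable def Rnd {V : Type*} (a : V) (xh : ℕ → V ⊕ Unit) (n : ℕ) : ℕ :=
  nvisits xh (sInf {t | n ≤ returnsBy a xh t}) (Sum.inr ())



section Reach

variable {V : Type*} (p : V → V → ℝ) (a : V)

lemma reachSet_subset_succ (k : ℕ) : reachSet p a k ⊆ reachSet p a (k + 1) :=
  fun _ h => Or.inl h

lemma mem_reachSet_self (k : ℕ) : a ∈ reachSet p a k := by
  induction k with
  | zero => exact rfl
  | succ k ih => exact Or.inl ih

lemma reachSet_mono {j k : ℕ} (h : j ≤ k) : reachSet p a j ⊆ reachSet p a k := by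
  induction k with
  | zero => simpa [Nat.le_zero.1 h] using Set.Subset.rfl
  | succ k ih =>
      rcases Nat.le_succ_iff.1 h with h' | h'
      · exact (ih h').trans (reachSet_subset_succ p a k)
      · exact h' ▸ Set.Subset.rfl

lemma mem_pred_of_not_layer {u : V} {D : ℕ} (hu : u ∈ reachSet p a D)
    (hl : u ∉ layer p a D) : u ∈ reachSet p a (D - 1) := by
  by_contra h
  exact hl ⟨hu, h⟩

lemma a_not_layer (D : ℕ) : a ∉ layer p a D :=
  fun h => h.2 (mem_reachSet_self p a (D - 1))

end Reach

section WalkBasic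

variable {V : Type*}

lemma nvisits_zero (x : ℕ → V) (v : V) : nvisits x 0 v = 0 := by
  simp [nvisits]

lemma nvisits_succ (x : ℕ → V) (t : ℕ) (v : V) :
    nvisits x (t + 1) v = nvisits x t v + if x t = v then 1 else 0 := by
  unfold nvisits
  rw [Finset.range_add_one, Finset.filter_insert]
  by_cases h : x t = v
  · rw [if_pos h, if_pos h, Finset.card_insert_of_notMem
      (fun hc => absurd (Finset.mem_range.1 (Finset.mem_filter.1 hc).1) (lt_irrefl t))]
  · rw [if_neg h, if_neg h, Nat.add_zero]

lemma rotor_formula {D : V → ℕ} {Sc : V → ℕ → V} {x : ℕ → V} {r : ℕ → V → ℕ}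
    (hw : IsRotorWalk D Sc x r) : ∀ t v, r t v = (r 0 v + nvisits x t v) % D v := by
  intro t
  induction t with
  | zero =>
      intro v
      rw [nvisits_zero, Nat.add_zero, Nat.mod_eq_of_lt (hw.1 v)]
  | succ t ih =>
      intro v
      by_cases hv : v = x t
      · subst hv
        rw [hw.2.1 t, ih (x t), nvisits_succ, if_pos rfl, Nat.mod_add_mod, ← Nat.add_assoc]
      · rw [hw.2.2.1 t v hv, ih v, nvisits_succ, if_neg (fun h => hv h.symm), Nat.add_zero]

lemma rotor_lt {D : V → ℕ} {Sc : V → ℕ → V} {x : ℕ → V} {r : ℕ → V → ℕ}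
    (hw : IsRotorWalk D Sc x r) (t : ℕ) (v : V) : r t v < D v := by
  rw [rotor_formula hw]
  have := hw.1 v
  exact Nat.mod_lt _ (by omega)

lemma step_formula {D : V → ℕ} {Sc : V → ℕ → V} {x : ℕ → V} {r : ℕ → V → ℕ}
    (hw : IsRotorWalk D Sc x r) (t : ℕ) :
    x (t + 1) = Sc (x t) ((r 0 (x t) + nvisits x t (x t) + 1) % D (x t)) := by
  rw [hw.2.2.2 t, hw.2.1 t, rotor_formula hw t (x t), Nat.mod_add_mod]

end WalkBasic

section ReturnsBy

variable {V : Type*} (a : V) (x : ℕ → V ⊕ Unit)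

lemma returnsBy_zero : returnsBy a x 0 = 0 := by
  simp [returnsBy]

lemma returnsBy_succ (t : ℕ) :
    returnsBy a x (t + 1) =
      returnsBy a x t + if x (t + 1) = (Sum.inl a : V ⊕ Unit) then 1 else 0 := by
  unfold returnsBy
  rw [← Finset.insert_Icc_right_eq_Icc_add_one (by omega : 1 ≤ t + 1), Finset.filter_insert]
  by_cases h : x (t + 1) = (Sum.inl a : V ⊕ Unit)
  · rw [if_pos h, if_pos h, Finset.card_insert_of_notMem]
    intro hc
    have := (Finset.mem_Icc.1 (Finset.mem_filter.1 hc).1).2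
    omega
  · rw [if_neg h, if_neg h, Nat.add_zero]

lemma returnsBy_mono {s t : ℕ} (h : s ≤ t) : returnsBy a x s ≤ returnsBy a x t := by
  apply Finset.card_le_card
  exact Finset.filter_subset_filter _ (Finset.Icc_subset_Icc_right h)

end ReturnsBy

section Hat

variable {V : Type*} (p : V → V → ℝ) (a : V) (d : V → ℕ) (succ : V → ℕ → V) (r₀ : V → ℕ)

def sinkD (D : ℕ) : V ⊕ Unit → Prop
  | Sum.inl u => u ∈ layer p a D
  | Sum.inr _ => True

noncomputable def tgtW (D : ℕ) (w : V ⊕ Unit) (k : ℕ) : V ⊕ Unit :=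
  succHat p a succ D w ((rHat p a r₀ D w + k + 1) % dHat p a d D w)

lemma sinkD_inl (D : ℕ) (u : V) : sinkD p a D (Sum.inl u) ↔ u ∈ layer p a D := Iff.rfl

lemma sinkD_inr (D : ℕ) : sinkD p a D (Sum.inr ()) := trivial

lemma not_sink_a0 (D : ℕ) : ¬ sinkD p a D (Sum.inl a) := a_not_layer p a D

lemma return_char {D : ℕ} {x : ℕ → V ⊕ Unit} {r : ℕ → V ⊕ Unit → ℕ}
    (hw : IsRotorWalk (dHat p a d D) (succHat p a succ D) x r) (t : ℕ) :
    x (t + 1) = Sum.inl a ↔ sinkD p a D (x t) := by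
  have hstep := hw.2.2.2 t
  rcases hxt : x t with u | u
  · rw [hxt] at hstep
    by_cases hu : u ∈ layer p a D
    · simp only [succHat, if_pos hu] at hstep
      simp [hstep, sinkD, hu]
    · constructor
      · intro h
        rw [hstep] at h
        simp only [succHat, if_neg hu] at h
        by_cases h2 : succ u (r (t + 1) (Sum.inl u)) = a
        · rw [if_pos h2] at h
          exact absurd h (by simp)
        · rw [if_neg h2] at h
          exact absurd (Sum.inl.inj h) h2
      · intro h
        exact absurd h (by simpa [sinkD] using hu)
  · rw [hxt] at hstep
    simp only [succHat] at hstep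
    simp [hstep, sinkD]

lemma visited (hreal : Realizes d succ p) {D : ℕ} (hD : 1 ≤ D)
    {x : ℕ → V ⊕ Unit} {r : ℕ → V ⊕ Unit → ℕ}
    (hw : IsRotorWalk (dHat p a d D) (succHat p a succ D) x r)
    (hx0 : x 0 = Sum.inl a) (t : ℕ) :
    x t = Sum.inr () ∨ ∃ u, x t = Sum.inl u ∧ u ∈ reachSet p a D := by
  induction t with
  | zero => exact Or.inr ⟨a, hx0, mem_reachSet_self p a D⟩
  | succ t ih =>
      have hstep := hw.2.2.2 t
      rcases ih with h | ⟨u, hxt, hu⟩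
      · rw [h] at hstep
        simp only [succHat] at hstep
        exact Or.inr ⟨a, hstep, mem_reachSet_self p a D⟩
      · rw [hxt] at hstep
        by_cases hl : u ∈ layer p a D
        · simp only [succHat, if_pos hl] at hstep
          exact Or.inr ⟨a, hstep, mem_reachSet_self p a D⟩
        · have hu' : u ∈ reachSet p a (D - 1) := mem_pred_of_not_layer p a hu hl
          have hilt : r (t + 1) (Sum.inl u) < d u := by
            have h1 := rotor_lt hw (t + 1) (Sum.inl u)
            simpa [dHat, hl] using h1
          set i := r (t + 1) (Sum.inl u) with hi
          have hp : 0 < p u (succ u i) := by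
            rw [hreal.2 u (succ u i)]
            apply div_pos
            · have hcard : 0 < ((Finset.range (d u)).filter fun j => succ u j = succ u i).card :=
                Finset.card_pos.2 ⟨i, Finset.mem_filter.2 ⟨Finset.mem_range.2 hilt, rfl⟩⟩
              exact_mod_cast hcard
            · exact_mod_cast hreal.1 u
          have hmem : succ u i ∈ reachSet p a D := by
            have h2 : succ u i ∈ reachSet p a ((D - 1) + 1) := Or.inr ⟨u, hu', hp⟩
            rwa [show D - 1 + 1 = D by omega] at h2
          simp only [succHat, if_neg hl] at hstep
          split_ifs at hstep with h2
          · exact Or.inl hstep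
          · exact Or.inr ⟨succ u i, hstep, hmem⟩

end Hat


section Abelian

variable {W : Type*}

noncomputable def fireP (tgt : W → ℕ → W) (σ u : W → ℕ) (w : W) : W → ℕ :=
  fun v => σ v - (if v = w then 1 else 0) + (if tgt w (u w) = v then 1 else 0)

noncomputable def bumpU (u : W → ℕ) (w : W) : W → ℕ :=
  fun v => if v = w then u v + 1 else u v

noncomputable def runP (tgt : W → ℕ → W) : (W → ℕ) → (W → ℕ) → List W → W → ℕ
  | σ, _, [] => σ
  | σ, u, w :: l => runP tgt (fireP tgt σ u w) (bumpU u w) l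

noncomputable def runU : (W → ℕ) → List W → W → ℕ
  | u, [] => u
  | u, w :: l => runU (bumpU u w) l

def LegalSeq (S : W → Prop) (tgt : W → ℕ → W) : (W → ℕ) → (W → ℕ) → List W → Prop
  | _, _, [] => True
  | σ, u, w :: l => ¬ S w ∧ 1 ≤ σ w ∧ LegalSeq S tgt (fireP tgt σ u w) (bumpU u w) l

variable {S : W → Prop} {tgt : W → ℕ → W}

lemma runP_nil (σ u : W → ℕ) : runP tgt σ u [] = σ := rfl

lemma runP_cons (σ u : W → ℕ) (w : W) (l : List W) :
    runP tgt σ u (w :: l) = runP tgt (fireP tgt σ u w) (bumpU u w) l := rfl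

lemma runU_cons (u : W → ℕ) (w : W) (l : List W) :
    runU u (w :: l) = runU (bumpU u w) l := rfl

lemma runP_append (σ u : W → ℕ) (l₁ l₂ : List W) :
    runP tgt σ u (l₁ ++ l₂) = runP tgt (runP tgt σ u l₁) (runU u l₁) l₂ := by
  induction l₁ generalizing σ u with
  | nil => rfl
  | cons w l ih => simp [runP_cons, runU_cons, ih]

lemma runU_append (u : W → ℕ) (l₁ l₂ : List W) :
    runU u (l₁ ++ l₂) = runU (runU u l₁) l₂ := by
  induction l₁ generalizing u with
  | nil => rfl
  | cons w l ih => simp [runU_cons, ih]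

lemma legal_append_iff (σ u : W → ℕ) (l₁ l₂ : List W) :
    LegalSeq S tgt σ u (l₁ ++ l₂) ↔
      LegalSeq S tgt σ u l₁ ∧ LegalSeq S tgt (runP tgt σ u l₁) (runU u l₁) l₂ := by
  induction l₁ generalizing σ u with
  | nil => simp [LegalSeq, runP_nil, runU]
  | cons w l ih =>
      simp only [List.cons_append, LegalSeq, List.append_eq, ih, runP_cons, runU_cons]
      tauto

lemma legal_not_S {σ u : W → ℕ} {l : List W} (h : LegalSeq S tgt σ u l) :
    ∀ w ∈ l, ¬ S w := by
  induction l generalizing σ u with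
  | nil => simp
  | cons v l ih =>
      intro w hw
      rcases List.mem_cons.1 hw with h1 | h1
      · exact h1 ▸ h.1
      · exact ih h.2.2 w h1

lemma le_runP_of_not_mem {w : W} {l : List W} (hw : w ∉ l) (σ u : W → ℕ) :
    σ w ≤ runP tgt σ u l w := by
  induction l generalizing σ u with
  | nil => exact le_rfl
  | cons v l ih =>
      have hwv : w ≠ v := fun h => hw (h ▸ (List.mem_cons_self (a := v) (l := l)))
      refine le_trans ?_ (ih (fun h => hw (List.mem_cons_of_mem _ h)) _ _)
      simp only [fireP, if_neg hwv]
      omega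

lemma bumpU_comm (u : W → ℕ) {v w : W} (hvw : v ≠ w) :
    bumpU (bumpU u v) w = bumpU (bumpU u w) v := by
  funext z
  simp only [bumpU]
  by_cases h1 : z = w <;> by_cases h2 : z = v <;> simp_all

lemma fireP_comm (σ u : W → ℕ) {v w : W} (hvw : v ≠ w) (hv : 1 ≤ σ v) (hw : 1 ≤ σ w) :
    fireP tgt (fireP tgt σ u v) (bumpU u v) w = fireP tgt (fireP tgt σ u w) (bumpU u w) v := by
  have huv : (bumpU u v) w = u w := by simp [bumpU, Ne.symm hvw]
  have huw : (bumpU u w) v = u v := by simp [bumpU, hvw]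
  funext z
  simp only [fireP, huv, huw]
  by_cases h1 : z = w <;> by_cases h2 : z = v <;>
    by_cases h3 : tgt w (u w) = z <;> by_cases h4 : tgt v (u v) = z <;>
    simp_all

lemma mem_split_first {w : W} {l : List W} (h : w ∈ l) :
    ∃ l₁ l₂, l = l₁ ++ w :: l₂ ∧ w ∉ l₁ := by
  induction l with
  | nil => simp at h
  | cons v l ih =>
      by_cases hvw : w = v
      · exact ⟨[], l, by simp [hvw], by simp⟩
      · rcases List.mem_cons.1 h with h1 | h1
        · exact absurd h1 hvw
        · obtain ⟨l₁, l₂, rfl, hnm⟩ := ih h1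
          exact ⟨v :: l₁, l₂, by simp, by simp [hnm, hvw]⟩

lemma exchange {w : W} {γ₂ : List W} :
    ∀ (γ₁ : List W) (σ u : W → ℕ), w ∉ γ₁ → 1 ≤ σ w →
      LegalSeq S tgt σ u (γ₁ ++ w :: γ₂) →
      LegalSeq S tgt σ u (w :: (γ₁ ++ γ₂)) ∧
        runP tgt σ u (w :: (γ₁ ++ γ₂)) = runP tgt σ u (γ₁ ++ w :: γ₂) ∧
        runU u (w :: (γ₁ ++ γ₂)) = runU u (γ₁ ++ w :: γ₂) := by
  intro γ₁
  induction γ₁ with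
  | nil => intro σ u _ _ hleg; exact ⟨hleg, rfl, rfl⟩
  | cons v γ₁ ih =>
      intro σ u hnm hσw hleg
      have hwv : w ≠ v := fun h => hnm (h ▸ (List.mem_cons_self (a := v) (l := γ₁)))
      have hnm' : w ∉ γ₁ := fun h => hnm (List.mem_cons_of_mem _ h)
      obtain ⟨hSv, hσv, hleg'⟩ := hleg
      have hσ'w : 1 ≤ fireP tgt σ u v w := by
        simp only [fireP, if_neg hwv]; omega
      obtain ⟨ihleg, ihσ, ihu⟩ := ih (fireP tgt σ u v) (bumpU u v) hnm' hσ'w hleg'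
      obtain ⟨hSw, _, ihleg'⟩ := ihleg
      have hcomm := fireP_comm (tgt := tgt) σ u (Ne.symm hwv) hσv hσw
      have hucomm := bumpU_comm u (v := w) (w := v) hwv
      refine ⟨⟨hSw, hσw, ?_⟩, ?_, ?_⟩
      · refine ⟨hSv, ?_, ?_⟩
        · simp only [fireP, if_neg (Ne.symm hwv)]; omega
        · rw [← hcomm, hucomm]; exact ihleg'
      · show runP tgt σ u (w :: v :: (γ₁ ++ γ₂)) = runP tgt σ u (v :: (γ₁ ++ w :: γ₂))
        simp only [runP_cons]
        rw [← hcomm, hucomm, ← runP_cons, ihσ]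
      · show runU u (w :: v :: (γ₁ ++ γ₂)) = runU u (v :: (γ₁ ++ w :: γ₂))
        simp only [runU_cons]
        rw [hucomm, ← runU_cons, ihu]

lemma complete_extend :
    ∀ (N : ℕ) (σ u : W → ℕ) (α β : List W), β.length ≤ N →
      LegalSeq S tgt σ u α → LegalSeq S tgt σ u β →
      (∀ v, ¬ S v → runP tgt σ u β v = 0) →
      ∃ γ, LegalSeq S tgt σ u (α ++ γ) ∧ runP tgt σ u (α ++ γ) = runP tgt σ u β := by
  intro N
  induction N with
  | zero =>
      intro σ u α β hlen hα hβ hcomp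
      cases α with
      | nil => exact ⟨β, hβ, by simp⟩
      | cons w α' =>
          obtain ⟨hSw, hσw, _⟩ := hα
          have hβnil : β = [] := List.length_eq_zero_iff.1 (Nat.le_zero.1 hlen)
          subst hβnil
          have := hcomp w hSw
          simp [runP_nil] at this
          omega
  | succ N ih =>
      intro σ u α β hlen hα hβ hcomp
      cases α with
      | nil => exact ⟨β, hβ, by simp⟩
      | cons w α' =>
          obtain ⟨hSw, hσw, hα'⟩ := hα
          have hwβ : w ∈ β := by
            by_contra hw
            have := le_runP_of_not_mem (tgt := tgt) hw σ u
            have := hcomp w hSw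
            omega
          obtain ⟨γ₁, γ₂, rfl, hnm⟩ := mem_split_first hwβ
          obtain ⟨hlegβ', hσβ', huβ'⟩ := exchange γ₁ σ u hnm hσw hβ
          obtain ⟨_, _, hlegγ⟩ := hlegβ'
          have hlen' : (γ₁ ++ γ₂).length ≤ N := by
            simp only [List.length_append, List.length_cons] at hlen ⊢
            omega
          have hcomp' : ∀ v, ¬ S v →
              runP tgt (fireP tgt σ u w) (bumpU u w) (γ₁ ++ γ₂) v = 0 := by
            intro v hv
            have : runP tgt σ u (w :: (γ₁ ++ γ₂)) v = 0 := by
              rw [hσβ']; exact hcomp v hv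
            rwa [runP_cons] at this
          obtain ⟨γ, hlegγ', hσγ'⟩ := ih (fireP tgt σ u w) (bumpU u w) α' (γ₁ ++ γ₂)
            hlen' hα' hlegγ hcomp'
          refine ⟨γ, ⟨hSw, hσw, hlegγ'⟩, ?_⟩
          show runP tgt σ u (w :: (α' ++ γ)) = _
          rw [runP_cons, hσγ', ← runP_cons, hσβ']

lemma abelian_le {σ u : W → ℕ} {α β : List W} {s : W}
    (hα : LegalSeq S tgt σ u α) (hβ : LegalSeq S tgt σ u β)
    (hcomp : ∀ v, ¬ S v → runP tgt σ u β v = 0) (hs : S s) :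
    runP tgt σ u α s ≤ runP tgt σ u β s := by
  obtain ⟨γ, hleg, hσ⟩ := complete_extend β.length σ u α β le_rfl hα hβ hcomp
  have hγ : LegalSeq S tgt (runP tgt σ u α) (runU u α) γ :=
    ((legal_append_iff σ u α γ).1 hleg).2
  have hsγ : s ∉ γ := fun h => legal_not_S hγ s h hs
  calc runP tgt σ u α s ≤ runP tgt (runP tgt σ u α) (runU u α) γ s :=
        le_runP_of_not_mem hsγ _ _
    _ = runP tgt σ u (α ++ γ) s := by rw [runP_append]
    _ = runP tgt σ u β s := by rw [hσ]

lemma legal_transfer {S' : W → Prop} {tgt' : W → ℕ → W} :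
    ∀ (l : List W) (σ u : W → ℕ),
      (∀ w ∈ l, ¬ S' w ∧ ∀ k, tgt' w k = tgt w k) →
      LegalSeq S tgt σ u l →
      LegalSeq S' tgt' σ u l ∧ runP tgt' σ u l = runP tgt σ u l := by
  intro l
  induction l with
  | nil => exact fun σ u _ _ => ⟨trivial, rfl⟩
  | cons w l ih =>
      intro σ u hprop hleg
      obtain ⟨hSw, hσw, hleg'⟩ := hleg
      obtain ⟨hS'w, htgtw⟩ := hprop w ((List.mem_cons_self (a := w) (l := l)))
      have hfire : fireP tgt' σ u w = fireP tgt σ u w := by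
        funext v; simp only [fireP, htgtw (u w)]
      obtain ⟨ih1, ih2⟩ := ih (fireP tgt σ u w) (bumpU u w)
        (fun v hv => hprop v (List.mem_cons_of_mem _ hv)) hleg'
      exact ⟨⟨hS'w, hσw, hfire ▸ ih1⟩, by rw [runP_cons, runP_cons, hfire, ih2]⟩

end Abelian


section Routing

variable {V : Type*} (p : V → V → ℝ) (a : V) (d : V → ℕ) (succ : V → ℕ → V) (r₀ : V → ℕ)

noncomputable def sigmaT (D n t : ℕ) (x : ℕ → V ⊕ Unit) : V ⊕ Unit → ℕ := fun v =>
  (if v = Sum.inl a then n - 1 - returnsBy a x t else 0) +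
  (if sinkD p a D v then nvisits x t v else 0) +
  (if x t = v then 1 else 0)

noncomputable def uT (D t : ℕ) (x : ℕ → V ⊕ Unit) : V ⊕ Unit → ℕ := fun v =>
  if sinkD p a D v then 0 else nvisits x t v

noncomputable def alist (D : ℕ) (x : ℕ → V ⊕ Unit) : ℕ → List (V ⊕ Unit)
  | 0 => []
  | t + 1 => alist D x t ++ if sinkD p a D (x t) then [] else [x t]

lemma alist_mem (D : ℕ) (x : ℕ → V ⊕ Unit) :
    ∀ t, ∀ w ∈ alist p a D x t, ∃ s, w = x s ∧ ¬ sinkD p a D w := by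
  intro t
  induction t with
  | zero => simp [alist]
  | succ t ih =>
      intro w hw
      rcases List.mem_append.1 hw with h | h
      · exact ih w h
      · by_cases hs : sinkD p a D (x t)
        · rw [if_pos hs] at h; simp at h
        · rw [if_neg hs] at h
          rcases List.mem_singleton.1 h with rfl
          exact ⟨t, rfl, hs⟩

lemma step_tgt {D : ℕ} {x : ℕ → V ⊕ Unit} {r : ℕ → V ⊕ Unit → ℕ}
    (hw : IsRotorWalk (dHat p a d D) (succHat p a succ D) x r)
    (hr0 : ∀ w, r 0 w = rHat p a r₀ D w) (t : ℕ) :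
    x (t + 1) = tgtW p a d succ r₀ D (x t) (nvisits x t (x t)) := by
  rw [step_formula hw t, hr0 (x t)]
  rfl

lemma routing_aux {D : ℕ} {x : ℕ → V ⊕ Unit} {r : ℕ → V ⊕ Unit → ℕ}
    (hw : IsRotorWalk (dHat p a d D) (succHat p a succ D) x r)
    (hx0 : x 0 = Sum.inl a) (hr0 : ∀ w, r 0 w = rHat p a r₀ D w)
    {n : ℕ} (hn : 1 ≤ n) :
    ∀ t, returnsBy a x t ≤ n - 1 →
      LegalSeq (sinkD p a D) (tgtW p a d succ r₀ D)
          (fun v => if v = Sum.inl a then n else 0) (fun _ => 0) (alist p a D x t) ∧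
        runP (tgtW p a d succ r₀ D) (fun v => if v = Sum.inl a then n else 0) (fun _ => 0)
          (alist p a D x t) = sigmaT p a D n t x ∧
        runU (fun _ => 0) (alist p a D x t) = uT p a D t x := by
  intro t
  induction t with
  | zero =>
      intro _
      refine ⟨trivial, ?_, ?_⟩
      · funext v
        show (if v = Sum.inl a then n else 0) = _
        simp only [sigmaT, returnsBy_zero, nvisits_zero, hx0]
        by_cases hv : v = Sum.inl a
        · simp [hv, Eq.comm]
          omega
        · have h' : ¬ (Sum.inl a = v) := fun h => hv h.symm
          simp [hv, h']
      · funext v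
        show (0 : ℕ) = uT p a D 0 x v
        simp [uT, nvisits_zero]
  | succ t ih =>
      intro ht
      have ht' : returnsBy a x t ≤ n - 1 :=
        le_trans (returnsBy_mono a x (Nat.le_succ t)) ht
      obtain ⟨ihL, ihσ, ihu⟩ := ih ht'
      have hret_succ := returnsBy_succ a x t
      by_cases hs : sinkD p a D (x t)
      · -- sink step: skipped fire
        have hxa : x (t + 1) = Sum.inl a := (return_char p a d succ hw t).2 hs
        have hkey : returnsBy a x (t + 1) = returnsBy a x t + 1 := by
          rw [hret_succ, if_pos hxa]
        have hxta : x t ≠ Sum.inl a := fun h => not_sink_a0 p a D (h ▸ hs)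
        have halist : alist p a D x (t + 1) = alist p a D x t := by
          simp [alist, hs]
        refine ⟨halist ▸ ihL, ?_, ?_⟩
        · rw [halist, ihσ]
          funext v
          simp only [sigmaT, nvisits_succ, hkey, hxa]
          by_cases hv : v = Sum.inl a
          · have h1 : ¬ sinkD p a D v := hv ▸ not_sink_a0 p a D
            have h2 : x t ≠ v := hv ▸ hxta
            have h3 : returnsBy a x t + 1 ≤ n - 1 := hkey ▸ ht
            simp only [if_pos hv, if_neg h1, if_neg h2, if_pos (hv.symm : Sum.inl a = v)]
            omega
          · have h4 : ¬ (Sum.inl a = v) := fun h => hv h.symm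
            simp only [if_neg hv, if_neg h4]
            by_cases h5 : x t = v
            · have h6 : sinkD p a D v := h5 ▸ hs
              simp [h5, h6]
            · simp [h5]
        · rw [halist, ihu]
          funext v
          simp only [uT, nvisits_succ]
          by_cases hv : sinkD p a D v
          · simp [hv]
          · have h5 : x t ≠ v := fun h => hv (h ▸ hs)
            simp [hv, h5]
      · -- genuine fire
        have hxa : x (t + 1) ≠ Sum.inl a := fun h => hs ((return_char p a d succ hw t).1 h)
        have hkey : returnsBy a x (t + 1) = returnsBy a x t := by
          rw [hret_succ, if_neg hxa, Nat.add_zero]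
        have halist : alist p a D x (t + 1) = alist p a D x t ++ [x t] := by
          simp [alist, hs]
        have hstep : tgtW p a d succ r₀ D (x t) (uT p a D t x (x t)) = x (t + 1) := by
          have h1 : uT p a D t x (x t) = nvisits x t (x t) := if_neg hs
          rw [h1, ← step_tgt p a d succ r₀ hw hr0 t]
        have hσ1 : 1 ≤ sigmaT p a D n t x (x t) := by
          unfold sigmaT
          split_ifs <;> first | omega | simp_all
        refine ⟨?_, ?_, ?_⟩
        · rw [halist, legal_append_iff, ihσ, ihu]
          exact ⟨ihL, hs, hσ1, trivial⟩
        · rw [halist, runP_append, ihσ, ihu, runP_cons, runP_nil]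
          funext v
          simp only [fireP, hstep, sigmaT, nvisits_succ, hkey]
          by_cases h1 : v = x t
          · simp only [h1, eq_self_iff_true, if_true, if_neg hs]
            omega
          · have h3 : ¬ (x t = v) := fun h => h1 h.symm
            simp only [if_neg h1, if_neg h3, Nat.add_zero]
            omega
        · rw [halist, runU_append, ihu, runU_cons]
          show bumpU (uT p a D t x) (x t) = uT p a D (t + 1) x
          funext v
          simp only [bumpU, uT, nvisits_succ]
          by_cases h1 : v = x t
          · simp [h1, hs]
          · have h3 : ¬ (x t = v) := fun h => h1 h.symm
            simp [h1, h3]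

end Routing

section Assemble

variable {V : Type*} (p : V → V → ℝ) (a : V) (d : V → ℕ) (succ : V → ℕ → V) (r₀ : V → ℕ)

lemma walk_routing (hreal : Realizes d succ p) {D : ℕ}
    {x : ℕ → V ⊕ Unit} {r : ℕ → V ⊕ Unit → ℕ}
    (hw : IsRotorWalk (dHat p a d D) (succHat p a succ D) x r)
    (hx0 : x 0 = Sum.inl a) (hr0 : ∀ w, r 0 w = rHat p a r₀ D w)
    {n : ℕ} (hn : 1 ≤ n) (hret : ∃ t, n ≤ returnsBy a x t) :
    ∃ A : List (V ⊕ Unit),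
      (∀ w ∈ A, ∃ s, w = x s ∧ ¬ sinkD p a D w) ∧
      LegalSeq (sinkD p a D) (tgtW p a d succ r₀ D)
        (fun v => if v = Sum.inl a then n else 0) (fun _ => 0) A ∧
      (∀ v, ¬ sinkD p a D v →
        runP (tgtW p a d succ r₀ D) (fun v => if v = Sum.inl a then n else 0)
          (fun _ => 0) A v = 0) ∧
      runP (tgtW p a d succ r₀ D) (fun v => if v = Sum.inl a then n else 0) (fun _ => 0) A
        (Sum.inr ()) = Rnd a x n := by
  have hne : {t | n ≤ returnsBy a x t}.Nonempty := hret
  have hTmem : n ≤ returnsBy a x (sInf {t | n ≤ returnsBy a x t}) := Nat.sInf_mem hne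
  have hT1 : sInf {t | n ≤ returnsBy a x t} ≠ 0 := by
    intro h
    rw [h, returnsBy_zero] at hTmem
    omega
  obtain ⟨S, hTS⟩ : ∃ S, sInf {t | n ≤ returnsBy a x t} = S + 1 :=
    ⟨sInf {t | n ≤ returnsBy a x t} - 1, by omega⟩
  have hSlt : returnsBy a x S < n := by
    have h1 : S ∉ {t | n ≤ returnsBy a x t} := Nat.notMem_of_lt_sInf (by omega)
    have h2 : ¬ (n ≤ returnsBy a x S) := h1
    omega
  rw [hTS] at hTmem
  have hstep := returnsBy_succ a x S
  have hxa : x (S + 1) = Sum.inl a := by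
    by_contra h
    rw [if_neg h, Nat.add_zero] at hstep
    omega
  rw [if_pos hxa] at hstep
  have hSn : returnsBy a x S = n - 1 := by omega
  have hsink : sinkD p a D (x S) := (return_char p a d succ hw S).1 hxa
  obtain ⟨hL, hσ, -⟩ := routing_aux p a d succ r₀ hw hx0 hr0 hn S (by omega)
  refine ⟨alist p a D x S, alist_mem p a D x S, hL, ?_, ?_⟩
  · intro v hv
    rw [hσ]
    have h1 : x S ≠ v := fun h => hv (h ▸ hsink)
    simp [sigmaT, hSn, h1, hv]
  · rw [hσ]
    have hR : Rnd a x n = nvisits x (S + 1) (Sum.inr ()) := by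
      unfold Rnd
      rw [hTS]
    rw [hR, nvisits_succ]
    have h2 : (Sum.inr () : V ⊕ Unit) ≠ Sum.inl a := by simp
    simp [sigmaT, h2, sinkD]

end Assemble


/-- Lemma `mono`: `R_n^{d+1} ≥ R_n^d`. -/
theorem truncated_returns_mono {V : Type*} [Countable V]
    (p : V → V → ℝ) (a : V) (d : V → ℕ) (succ : V → ℕ → V)
    (hreal : Realizes d succ p) (hirr : IrreducibleKernel p)
    (r₀ : V → ℕ) (hr₀ : ∀ v, r₀ v < d v)
    (n dd : ℕ) (hdd : 1 ≤ dd)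
    (x₁ : ℕ → V ⊕ Unit) (r₁ : ℕ → V ⊕ Unit → ℕ)
    (hw₁ : IsRotorWalk (dHat p a d dd) (succHat p a succ dd) x₁ r₁)
    (hx₁ : x₁ 0 = Sum.inl a) (hr₁ : ∀ w, r₁ 0 w = rHat p a r₀ dd w)
    (hret₁ : ∃ t, n ≤ returnsBy a x₁ t)
    (x₂ : ℕ → V ⊕ Unit) (r₂ : ℕ → V ⊕ Unit → ℕ)
    (hw₂ : IsRotorWalk (dHat p a d (dd + 1)) (succHat p a succ (dd + 1)) x₂ r₂)
    (hx₂ : x₂ 0 = Sum.inl a) (hr₂ : ∀ w, r₂ 0 w = rHat p a r₀ (dd + 1) w)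
    (hret₂ : ∃ t, n ≤ returnsBy a x₂ t) :
    Rnd a x₁ n ≤ Rnd a x₂ n := by
  rcases Nat.eq_zero_or_pos n with rfl | hn
  · have h0 : sInf {t | 0 ≤ returnsBy a x₁ t} = 0 :=
      Nat.sInf_eq_zero.2 (Or.inl (Nat.zero_le _))
    have hz : Rnd a x₁ 0 = 0 := by
      unfold Rnd
      rw [h0, nvisits_zero]
    rw [hz]
    exact Nat.zero_le _
  · obtain ⟨A₁, hM₁, hL₁, hC₁, hV₁⟩ :=
      walk_routing p a d succ r₀ hreal hw₁ hx₁ hr₁ hn hret₁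
    obtain ⟨A₂, hM₂, hL₂, hC₂, hV₂⟩ :=
      walk_routing p a d succ r₀ hreal hw₂ hx₂ hr₂ hn hret₂
    have hprop : ∀ w ∈ A₁, ¬ sinkD p a (dd + 1) w ∧
        ∀ k, tgtW p a d succ r₀ (dd + 1) w k = tgtW p a d succ r₀ dd w k := by
      intro w hwA
      obtain ⟨s, rfl, hns⟩ := hM₁ w hwA
      rcases visited p a d succ hreal hdd hw₁ hx₁ s with h | ⟨u, hxu, hu⟩
      · rw [h] at hns
        exact absurd trivial hns
      · rw [hxu] at hns ⊢
        have hul : u ∉ layer p a dd := hns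
        have hu' : u ∈ reachSet p a (dd - 1) := mem_pred_of_not_layer p a hu hul
        have hu'' : u ∈ reachSet p a dd := reachSet_mono p a (by omega) hu'
        have hul1 : u ∉ layer p a (dd + 1) := fun hl => hl.2 hu''
        refine ⟨hul1, fun k => ?_⟩
        simp [tgtW, dHat, rHat, succHat, hul, hul1]
    obtain ⟨hL₁', hrun₁⟩ := legal_transfer A₁ _ _ hprop hL₁
    have hkey := abelian_le (S := sinkD p a (dd + 1)) (tgt := tgtW p a d succ r₀ (dd + 1))
      hL₁' hL₂ hC₂ (sinkD_inr p a (dd + 1))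
    rw [hrun₁, hV₁, hV₂] at hkey
    exact hkey
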